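/- Let (E₁, B₁) and (E₂, B₂) be finite-dimensional real vector spaces with nondegenerate symmetric bilinear forms, carrying generalised metrics τ₁ and τ₂ with associated positive-definite forms Gᵢ(e, e') = Bᵢ(e, τᵢ(e')) and +1-eigenspaces Vᵢ⁺ = ker(id − τᵢ). Let Φ : E₁ → E₂ be a linear isomorphism with B₂(Φ(e), Φ(e')) = B₁(e, e') for all e, e' ∈ E₁. Then the following are equivalent: (i) τ₂ ∘ Φ = Φ ∘ τ₁; (ii) G₂(Φ(e), Φ(e')) = G₁(e, e') for all e, e' ∈ E₁; (iii) Φ(V₁⁺) = V₂⁺. -/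

import Mathlib

/-- Equivalent characterisations of a classical generalised isometry: intertwining the
involutions, isometry of the associated metrics, matching of the `+1`-eigenspaces. -/
theorem stmt15 (E₁ E₂ : Type*) [AddCommGroup E₁] [Module ℝ E₁] [FiniteDimensional ℝ E₁]
    [AddCommGroup E₂] [Module ℝ E₂] [FiniteDimensional ℝ E₂]
    (B₁ : LinearMap.BilinForm ℝ E₁) (B₂ : LinearMap.BilinForm ℝ E₂)
    (hB₁symm : ∀ e e', B₁ e e' = B₁ e' e) (hB₁nd : LinearMap.BilinForm.Nondegenerate B₁)
    (hB₂symm : ∀ e e', B₂ e e' = B₂ e' e) (hB₂nd : LinearMap.BilinForm.Nondegenerate B₂)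
    (τ₁ : E₁ →ₗ[ℝ] E₁) (hτ₁inv : τ₁ ∘ₗ τ₁ = LinearMap.id)
    (hG₁symm : ∀ e e', B₁ e (τ₁ e') = B₁ e' (τ₁ e))
    (hG₁pos : ∀ e : E₁, e ≠ 0 → 0 < B₁ e (τ₁ e))
    (τ₂ : E₂ →ₗ[ℝ] E₂) (hτ₂inv : τ₂ ∘ₗ τ₂ = LinearMap.id)
    (hG₂symm : ∀ e e', B₂ e (τ₂ e') = B₂ e' (τ₂ e))
    (hG₂pos : ∀ e : E₂, e ≠ 0 → 0 < B₂ e (τ₂ e))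
    (Φ : E₁ ≃ₗ[ℝ] E₂)
    (hΦ : ∀ e e' : E₁, B₂ (Φ e) (Φ e') = B₁ e e') :
    ((τ₂ ∘ₗ (Φ : E₁ →ₗ[ℝ] E₂) = (Φ : E₁ →ₗ[ℝ] E₂) ∘ₗ τ₁) ↔
        (∀ e e' : E₁, B₂ (Φ e) (τ₂ (Φ e')) = B₁ e (τ₁ e'))) ∧
    ((τ₂ ∘ₗ (Φ : E₁ →ₗ[ℝ] E₂) = (Φ : E₁ →ₗ[ℝ] E₂) ∘ₗ τ₁) ↔
        Submodule.map (Φ : E₁ →ₗ[ℝ] E₂) (LinearMap.ker (LinearMap.id - τ₁))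
          = LinearMap.ker (LinearMap.id - τ₂)) := by
  have hτ₁p : ∀ e, τ₁ (τ₁ e) = e := fun e => by
    simpa using LinearMap.congr_fun hτ₁inv e
  have hτ₂p : ∀ e, τ₂ (τ₂ e) = e := fun e => by
    simpa using LinearMap.congr_fun hτ₂inv e
  have hker₁ : ∀ e : E₁, e ∈ LinearMap.ker (LinearMap.id - τ₁) ↔ τ₁ e = e := by
    intro e
    rw [LinearMap.mem_ker, LinearMap.sub_apply, LinearMap.id_apply, sub_eq_zero, eq_comm]
  have hker₂ : ∀ x : E₂, x ∈ LinearMap.ker (LinearMap.id - τ₂) ↔ τ₂ x = x := by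
    intro x
    rw [LinearMap.mem_ker, LinearMap.sub_apply, LinearMap.id_apply, sub_eq_zero, eq_comm]
  have hG₂zero : ∀ e : E₂, B₂ e (τ₂ e) = 0 → e = 0 := by
    intro e he
    by_contra h
    exact absurd he (ne_of_gt (hG₂pos e h))
  have orth₁ : ∀ v w : E₁, τ₁ v = v → τ₁ w = -w → B₁ v w = 0 := by
    intro v w hv hw
    have h := hG₁symm v w
    rw [hw, hv, map_neg] at h
    have h2 := hB₁symm v w
    linarith
  have orth₂ : ∀ v w : E₂, τ₂ v = v → τ₂ w = -w → B₂ v w = 0 := by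
    intro v w hv hw
    have h := hG₂symm v w
    rw [hw, hv, map_neg] at h
    have h2 := hB₂symm v w
    linarith
  have perp₂ : ∀ x : E₂, (∀ v, τ₂ v = v → B₂ v x = 0) → τ₂ x = -x := by
    intro x hx
    set p := (2:ℝ)⁻¹ • (x + τ₂ x) with hp_def
    set m := (2:ℝ)⁻¹ • (x - τ₂ x) with hm_def
    have hp : τ₂ p = p := by
      simp only [hp_def, map_smul, map_add, hτ₂p x]
      rw [add_comm]
    have hm : τ₂ m = -m := by
      simp only [hm_def, map_smul, map_sub, hτ₂p x]
      rw [← smul_neg, neg_sub]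
    have hxpm : x = p + m := by
      rw [hp_def, hm_def, ← smul_add]
      rw [show x + τ₂ x + (x - τ₂ x) = (2:ℝ) • x by module]
      rw [smul_smul]; norm_num
    have h0 : B₂ p x = 0 := hx p hp
    rw [hxpm, map_add, orth₂ p m hp hm, add_zero] at h0
    have hp0 : p = 0 := hG₂zero p (by rw [hp]; exact h0)
    rw [hxpm, hp0, zero_add, hm]
  constructor
  · constructor
    · intro h e e'
      have := LinearMap.congr_fun h e'
      simp only [LinearMap.comp_apply, LinearEquiv.coe_coe] at this
      rw [this, hΦ]
    · intro h
      ext e'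
      simp only [LinearMap.comp_apply, LinearEquiv.coe_coe]
      have hd : ∀ x : E₂, B₂ x (τ₂ (Φ e') - Φ (τ₁ e')) = 0 := by
        intro x
        have hx : x = Φ (Φ.symm x) := (Φ.apply_symm_apply x).symm
        rw [map_sub, hx, h (Φ.symm x) e', hΦ, sub_eq_zero]
      have hz : τ₂ (Φ e') - Φ (τ₁ e') = 0 := by
        apply hB₂nd.1
        intro n
        rw [hB₂symm]; exact hd n
      exact sub_eq_zero.mp hz
  · constructor
    · intro h
      ext x
      simp only [Submodule.mem_map, LinearEquiv.coe_coe]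
      rw [hker₂]
      constructor
      · rintro ⟨e, he, rfl⟩
        rw [hker₁] at he
        have := LinearMap.congr_fun h e
        simp only [LinearMap.comp_apply, LinearEquiv.coe_coe] at this
        rw [this, he]
      · intro hx
        refine ⟨Φ.symm x, ?_, Φ.apply_symm_apply x⟩
        rw [hker₁]
        have := LinearMap.congr_fun h (Φ.symm x)
        simp only [LinearMap.comp_apply, LinearEquiv.coe_coe,
          Φ.apply_symm_apply] at this
        apply Φ.injective
        rw [Φ.apply_symm_apply, ← this, hx]
    · intro h
      have hfwd : ∀ e : E₁, τ₁ e = e → τ₂ (Φ e) = Φ e := by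
        intro e he
        have hmem : Φ e ∈ LinearMap.ker (LinearMap.id - τ₂) := by
          rw [← h]
          exact ⟨e, (hker₁ e).mpr he, rfl⟩
        exact (hker₂ _).mp hmem
      have hbwd : ∀ v : E₂, τ₂ v = v → ∃ w : E₁, τ₁ w = w ∧ Φ w = v := by
        intro v hv
        have hmem : v ∈ Submodule.map (Φ : E₁ →ₗ[ℝ] E₂)
            (LinearMap.ker (LinearMap.id - τ₁)) := by
          rw [h]; exact (hker₂ v).mpr hv
        obtain ⟨w, hw, hwv⟩ := hmem
        exact ⟨w, (hker₁ w).mp hw, hwv⟩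
      ext e
      simp only [LinearMap.comp_apply, LinearEquiv.coe_coe]
      have hp : τ₁ ((2:ℝ)⁻¹ • (e + τ₁ e)) = (2:ℝ)⁻¹ • (e + τ₁ e) := by
        simp only [map_smul, map_add, hτ₁p e]
        rw [add_comm]
      have hm : τ₁ ((2:ℝ)⁻¹ • (e - τ₁ e)) = -((2:ℝ)⁻¹ • (e - τ₁ e)) := by
        simp only [map_smul, map_sub, hτ₁p e]
        rw [← smul_neg, neg_sub]
      have hxpm : e = (2:ℝ)⁻¹ • (e + τ₁ e) + (2:ℝ)⁻¹ • (e - τ₁ e) := by module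
      have hτe : τ₁ e = (2:ℝ)⁻¹ • (e + τ₁ e) - (2:ℝ)⁻¹ • (e - τ₁ e) := by module
      have hΦm : τ₂ (Φ ((2:ℝ)⁻¹ • (e - τ₁ e))) = -Φ ((2:ℝ)⁻¹ • (e - τ₁ e)) := by
        apply perp₂
        intro v hv
        obtain ⟨w, hw, rfl⟩ := hbwd v hv
        rw [hΦ]
        exact orth₁ w _ hw hm
      calc τ₂ (Φ e)
          = τ₂ (Φ ((2:ℝ)⁻¹ • (e + τ₁ e))) + τ₂ (Φ ((2:ℝ)⁻¹ • (e - τ₁ e))) := by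
            conv_lhs => rw [hxpm]
            rw [map_add, map_add]
        _ = Φ ((2:ℝ)⁻¹ • (e + τ₁ e)) - Φ ((2:ℝ)⁻¹ • (e - τ₁ e)) := by
            rw [hfwd _ hp, hΦm]; abel
        _ = Φ (τ₁ e) := by rw [← map_sub, ← hτe]
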